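/- If u solves Δu + f(x,u) = 0 on Ω, z = x·∇u, and F(x,u) = ∫₀ᵘ f(x,t)dt, then the pointwise differential identity holds: Σᵢ ∂/∂xᵢ[ z u_{xᵢ} - u z_{xᵢ} + xᵢ(2F(x,u) - u f(x,u)) ] = 2n F(x,u) + (2-n) u f(x,u) + 2 Σᵢ xᵢ F_{xᵢ}(x,u) on Ω. -/

import Mathlib

open MeasureTheory Set Real
open scoped RealInnerProductSpace
noncomputable section

abbrev Euc (n : ℕ) := EuclideanSpace ℝ (Fin n)

/-- The partial derivative of `f` in the `i`-th coordinate direction. -/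
def pd {n : ℕ} (f : Euc n → ℝ) (i : Fin n) (x : Euc n) : ℝ :=
  fderiv ℝ f x (EuclideanSpace.single i 1)

/-- The Laplacian of `f`. -/
def lap {n : ℕ} (f : Euc n → ℝ) (x : Euc n) : ℝ :=
  ∑ i, pd (fun y => pd f i y) i x

section helpers

variable {n : ℕ}

lemma pd_congr {f g : Euc n → ℝ} {x : Euc n} (h : f =ᶠ[nhds x] g) (i : Fin n) :
    pd f i x = pd g i x := by
  unfold pd; rw [Filter.EventuallyEq.fderiv_eq h]

lemma HasFDerivAt.pd_eq {f : Euc n → ℝ} {f' : Euc n →L[ℝ] ℝ} {x : Euc n}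
    (h : HasFDerivAt f f' x) (i : Fin n) : pd f i x = f' (EuclideanSpace.single i 1) := by
  unfold pd; rw [h.fderiv]

lemma pd_add {f g : Euc n → ℝ} {x : Euc n} (hf : DifferentiableAt ℝ f x)
    (hg : DifferentiableAt ℝ g x) (i : Fin n) :
    pd (fun y => f y + g y) i x = pd f i x + pd g i x := by
  unfold pd; rw [fderiv_fun_add hf hg]; rfl

lemma pd_sub {f g : Euc n → ℝ} {x : Euc n} (hf : DifferentiableAt ℝ f x)
    (hg : DifferentiableAt ℝ g x) (i : Fin n) :
    pd (fun y => f y - g y) i x = pd f i x - pd g i x := by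
  unfold pd; rw [fderiv_fun_sub hf hg]; rfl

lemma pd_mul {f g : Euc n → ℝ} {x : Euc n} (hf : DifferentiableAt ℝ f x)
    (hg : DifferentiableAt ℝ g x) (i : Fin n) :
    pd (fun y => f y * g y) i x = pd f i x * g x + f x * pd g i x := by
  unfold pd; rw [fderiv_fun_mul hf hg]
  simp only [ContinuousLinearMap.add_apply, ContinuousLinearMap.smul_apply, smul_eq_mul]
  ring

lemma pd_const_mul {g : Euc n → ℝ} {x : Euc n} (c : ℝ)
    (hg : DifferentiableAt ℝ g x) (i : Fin n) :
    pd (fun y => c * g y) i x = c * pd g i x := by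
  unfold pd; rw [fderiv_const_mul hg]; rfl

lemma pd_sum {ι : Type*} (s : Finset ι) {f : ι → Euc n → ℝ} {x : Euc n}
    (h : ∀ j ∈ s, DifferentiableAt ℝ (f j) x) (i : Fin n) :
    pd (fun y => ∑ j ∈ s, f j y) i x = ∑ j ∈ s, pd (f j) i x := by
  unfold pd; rw [fderiv_fun_sum h, ContinuousLinearMap.sum_apply]

lemma pd_proj (j : Fin n) {x : Euc n} (i : Fin n) :
    pd (fun y : Euc n => y j) i x = if j = i then 1 else 0 := by
  have : pd (fun y : Euc n => y j) i x
      = (EuclideanSpace.proj (𝕜 := ℝ) j) (EuclideanSpace.single i 1) :=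
    (EuclideanSpace.proj (𝕜 := ℝ) j).hasFDerivAt.pd_eq i
  rw [this]
  simp [EuclideanSpace.single_apply]

lemma differentiableAt_proj (j : Fin n) {x : Euc n} :
    DifferentiableAt ℝ (fun y : Euc n => y j) x :=
  (EuclideanSpace.proj (𝕜 := ℝ) j).differentiableAt

lemma contDiffAt_pd {m k : WithTop ℕ∞} {f : Euc n → ℝ} {x : Euc n}
    (h : ContDiffAt ℝ k f x) (hk : m + 1 ≤ k) (i : Fin n) : ContDiffAt ℝ m (pd f i) x :=
  (((h.of_le hk).fderiv_right le_rfl).clm_apply contDiffAt_const)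

lemma pd_neg {f : Euc n → ℝ} {x : Euc n} (i : Fin n) :
    pd (fun y => -(f y)) i x = -pd f i x := by
  unfold pd; rw [fderiv_fun_neg]; rfl

lemma pd_pd_eq {f : Euc n → ℝ} {x : Euc n} (h : ContDiffAt ℝ 2 f x) (i j : Fin n) :
    pd (pd f j) i x = fderiv ℝ (fderiv ℝ f) x (EuclideanSpace.single i 1)
      (EuclideanSpace.single j 1) := by
  have hd : DifferentiableAt ℝ (fderiv ℝ f) x :=
    (h.fderiv_right (m := 1) (by norm_num)).differentiableAt one_ne_zero
  have : pd f j = fun y => (fderiv ℝ f y) (EuclideanSpace.single j 1) := rfl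
  rw [this]
  unfold pd
  rw [fderiv_clm_apply hd (differentiableAt_const _)]
  simp

lemma pd_pd_symm {f : Euc n → ℝ} {x : Euc n} (h : ContDiffAt ℝ 2 f x) (i j : Fin n) :
    pd (pd f j) i x = pd (pd f i) j x := by
  rw [pd_pd_eq h i j, pd_pd_eq h j i]
  exact h.isSymmSndFDerivAt (by simp [minSmoothness_of_isRCLikeNormedField]) _ _

lemma differentiableAt_sum_proj_mul {g : Fin n → Euc n → ℝ} {x : Euc n}
    (h : ∀ j, DifferentiableAt ℝ (g j) x) :
    DifferentiableAt ℝ (fun y : Euc n => ∑ j, y j * g j y) x :=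
  DifferentiableAt.fun_sum (fun j _ => (differentiableAt_proj j).mul (h j))

lemma pd_sum_proj_mul {g : Fin n → Euc n → ℝ} {x : Euc n}
    (h : ∀ j, DifferentiableAt ℝ (g j) x) (i : Fin n) :
    pd (fun y : Euc n => ∑ j, y j * g j y) i x
      = g i x + ∑ j, x j * pd (g j) i x := by
  rw [pd_sum Finset.univ (f := fun j y => y j * g j y) (fun j _ => ((differentiableAt_proj j).mul (h j))) i]
  have e : ∀ j, pd (fun y : Euc n => y j * g j y) i x
      = (if j = i then 1 else 0) * g j x + x j * pd (g j) i x := by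
    intro j
    rw [pd_mul (differentiableAt_proj j) (h j), pd_proj]
  rw [Finset.sum_congr rfl (fun j _ => e j), Finset.sum_add_distrib]
  congr 1
  simp [ite_mul, Finset.sum_ite_eq']


open intervalIntegral in
lemma key_param {n : ℕ} {Ω : Set (Euc n)} (hΩ : IsOpen Ω) {f : Euc n → ℝ → ℝ}
    (hf : ContDiffOn ℝ 1 (fun p : Euc n × ℝ => f p.1 p.2) (Ω ×ˢ (univ : Set ℝ)))
    {x₀ : Euc n} (hx : x₀ ∈ Ω) (t₀ : ℝ) :
    ∃ L : Euc n →L[ℝ] ℝ,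
      HasFDerivAt (fun y : Euc n => ∫ s in (0:ℝ)..t₀, f y s) L x₀ ∧
      HasFDerivAt (fun p : Euc n × ℝ => ∫ s in (0:ℝ)..p.2, f p.1 s)
        (L.comp (ContinuousLinearMap.fst ℝ (Euc n) ℝ)
          + f x₀ t₀ • (ContinuousLinearMap.snd ℝ (Euc n) ℝ)) (x₀, t₀) := by
  have hopen : IsOpen (Ω ×ˢ (univ : Set ℝ)) := hΩ.prod isOpen_univ
  have hmem : ∀ {y : Euc n} {s : ℝ}, y ∈ Ω → (y, s) ∈ Ω ×ˢ (univ : Set ℝ) :=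
    fun hy => ⟨hy, mem_univ _⟩
  have hdiff : ∀ {y : Euc n} {s : ℝ}, y ∈ Ω →
      HasFDerivAt (fun p : Euc n × ℝ => f p.1 p.2)
        (fderiv ℝ (fun p : Euc n × ℝ => f p.1 p.2) (y, s)) (y, s) := by
    intro y s hy
    exact ((hf.contDiffAt (hopen.mem_nhds (hmem hy))).differentiableAt
      one_ne_zero).hasFDerivAt
  have hcont : ∀ y ∈ Ω, Continuous (f y) := by
    intro y hy
    have : Continuous fun s : ℝ => (y, s) := by fun_prop
    have h2 : ContinuousOn (fun s : ℝ => f y s) univ := by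
      refine (hf.continuousOn.comp (this.continuousOn) ?_)
      intro s _; exact hmem hy
    exact continuousOn_univ.1 h2
  have hfC : ContinuousOn (fderiv ℝ (fun p : Euc n × ℝ => f p.1 p.2)) (Ω ×ˢ univ) :=
    hf.continuousOn_fderiv_of_isOpen hopen le_rfl
  -- choose a closed ball inside Ω
  obtain ⟨ε, εpos, hball⟩ : ∃ ε > 0, Metric.closedBall x₀ ε ⊆ Ω := by
    rcases Metric.isOpen_iff.1 hΩ x₀ hx with ⟨r, rpos, hr⟩
    exact ⟨r / 2, by linarith, fun y hy =>
      hr (lt_of_le_of_lt hy (by linarith) : dist y x₀ < r)⟩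
  set Dfj := fderiv ℝ (fun p : Euc n × ℝ => f p.1 p.2) with hDfj
  set F' : Euc n → ℝ → (Euc n →L[ℝ] ℝ) :=
    fun y s => (Dfj (y, s)).comp (ContinuousLinearMap.inl ℝ (Euc n) ℝ) with hF'
  -- bound for the derivative on a compact set
  obtain ⟨C, hC⟩ : ∃ C, ∀ q ∈ Metric.closedBall x₀ ε ×ˢ Set.uIcc 0 t₀, ‖Dfj q‖ ≤ C := by
    apply (((isCompact_closedBall x₀ ε).prod isCompact_uIcc)).exists_bound_of_continuousOn
    exact hfC.mono (fun q hq => ⟨hball hq.1, mem_univ _⟩)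
  have hC0 : ∀ y ∈ Metric.ball x₀ ε, ∀ s ∈ Set.uIcc 0 t₀, ‖F' y s‖ ≤ max C 0 := by
    intro y hy s hs
    refine ContinuousLinearMap.opNorm_le_bound _ (le_max_right _ _) (fun v => ?_)
    have h1 : ‖Dfj (y, s)‖ ≤ C := hC (y, s) ⟨Metric.ball_subset_closedBall hy, hs⟩
    have h2 : ‖(ContinuousLinearMap.inl ℝ (Euc n) ℝ) v‖ = ‖v‖ := by
      simp [ContinuousLinearMap.inl_apply, Prod.norm_def]
    calc ‖(Dfj (y, s)) ((ContinuousLinearMap.inl ℝ (Euc n) ℝ) v)‖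
        ≤ ‖Dfj (y, s)‖ * ‖(ContinuousLinearMap.inl ℝ (Euc n) ℝ) v‖ :=
          (Dfj (y, s)).le_opNorm _
      _ ≤ max C 0 * ‖v‖ := by
          rw [h2]
          exact mul_le_mul_of_nonneg_right (le_trans h1 (le_max_left _ _)) (norm_nonneg _)
  have hL := intervalIntegral.hasFDerivAt_integral_of_dominated_of_fderiv_le
      (F := fun y s => f y s) (F' := F') (x₀ := x₀) (a := (0:ℝ)) (b := t₀)
      (μ := volume) (bound := fun _ => max C 0) (Metric.ball_mem_nhds x₀ εpos)
      ?_ ?_ ?_ ?_ ?_ ?_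
  · refine ⟨∫ s in (0:ℝ)..t₀, F' x₀ s, hL, ?_⟩
    -- the corner term
    have hcorner : HasFDerivAt (fun p : Euc n × ℝ => ∫ s in t₀..p.2, f p.1 s)
        (f x₀ t₀ • ContinuousLinearMap.snd ℝ (Euc n) ℝ) (x₀, t₀) := by
      rw [hasFDerivAt_iff_isLittleO, Asymptotics.isLittleO_iff]
      intro c hc
      have hcontat : ContinuousAt (fun p : Euc n × ℝ => f p.1 p.2) (x₀, t₀) :=
        (hf.contDiffAt (hopen.mem_nhds (hmem hx))).continuousAt
      have hnh : {q : Euc n × ℝ | ‖f q.1 q.2 - f x₀ t₀‖ ≤ c} ∈ nhds (x₀, t₀) := by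
        have := hcontat (Metric.closedBall_mem_nhds (f x₀ t₀) hc)
        filter_upwards [this] with q hq
        simpa [Metric.mem_closedBall, dist_eq_norm] using hq
      obtain ⟨δ, δpos, hδ⟩ := Metric.mem_nhds_iff.1
        (Filter.inter_mem hnh (hopen.mem_nhds (hmem hx)))
      filter_upwards [Metric.ball_mem_nhds (x₀, t₀) δpos] with p hp
      have hp1 : p.1 ∈ Ω := (hδ hp).2.1
      have hdist : dist p.1 x₀ < δ ∧ dist p.2 t₀ < δ := by
        rw [Metric.mem_ball, Prod.dist_eq, max_lt_iff] at hp
        exact hp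
      have hclose : ∀ s ∈ Set.uIoc t₀ p.2, ‖f p.1 s - f x₀ t₀‖ ≤ c := by
        intro s hs
        have h1 : |s - t₀| ≤ |p.2 - t₀| := by
          rcases le_total t₀ p.2 with h | h
          · rw [Set.uIoc_of_le h] at hs
            rw [abs_of_nonneg (by linarith [hs.1]), abs_of_nonneg (by linarith)]
            linarith [hs.2]
          · rw [Set.uIoc_comm, Set.uIoc_of_le h] at hs
            rw [abs_of_nonpos (by linarith [hs.2]), abs_of_nonpos (by linarith)]
            linarith [hs.1]
        have : (p.1, s) ∈ Metric.ball (x₀, t₀) δ := by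
          rw [Metric.mem_ball, Prod.dist_eq, max_lt_iff]
          refine ⟨hdist.1, ?_⟩
          calc dist s t₀ = |s - t₀| := by rw [Real.dist_eq]
            _ ≤ |p.2 - t₀| := h1
            _ = dist p.2 t₀ := (Real.dist_eq _ _).symm
            _ < δ := hdist.2
        exact (hδ this).1
      have hint : IntervalIntegrable (f p.1) volume t₀ p.2 :=
        (hcont p.1 hp1).intervalIntegrable _ _
      have key : (∫ s in t₀..p.2, f p.1 s) - 0 - f x₀ t₀ * (p - (x₀, t₀)).2
          = ∫ s in t₀..p.2, (f p.1 s - f x₀ t₀) := by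
        rw [intervalIntegral.integral_sub hint (intervalIntegrable_const),
          intervalIntegral.integral_const, smul_eq_mul, Prod.snd_sub]
        ring
      have hbound : ‖(∫ s in t₀..p.2, (f p.1 s - f x₀ t₀))‖ ≤ c * |p.2 - t₀| :=
        intervalIntegral.norm_integral_le_of_norm_le_const hclose
      simp only [ContinuousLinearMap.smul_apply, smul_eq_mul,
        intervalIntegral.integral_same]
      have h3 : (ContinuousLinearMap.snd ℝ (Euc n) ℝ) (p - (x₀, t₀)) = (p - (x₀, t₀)).2 := rfl
      rw [h3, key]
      refine le_trans hbound (mul_le_mul_of_nonneg_left ?_ hc.le)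
      have h2 : |p.2 - t₀| = ‖(p - (x₀, t₀)).2‖ := by
        rw [Prod.snd_sub, Real.norm_eq_abs]
      rw [h2, Prod.norm_def]
      exact le_max_right _ _
    have h1 : HasFDerivAt (fun p : Euc n × ℝ => ∫ s in (0:ℝ)..t₀, f p.1 s)
        ((∫ s in (0:ℝ)..t₀, F' x₀ s).comp (ContinuousLinearMap.fst ℝ (Euc n) ℝ)) (x₀, t₀) :=
      by have := hL.comp (x₀, t₀) (hasFDerivAt_fst (p := (x₀, t₀)) (𝕜 := ℝ)); exact this
    have htotal := h1.add hcorner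
    apply htotal.congr_of_eventuallyEq
    have hev : {p : Euc n × ℝ | p.1 ∈ Ω} ∈ nhds (x₀, t₀) :=
      continuousAt_fst.preimage_mem_nhds (hΩ.mem_nhds hx)
    filter_upwards [hev] with p hp
    have hi1 : IntervalIntegrable (f p.1) volume 0 t₀ := (hcont p.1 hp).intervalIntegrable _ _
    have hi2 : IntervalIntegrable (f p.1) volume t₀ p.2 := (hcont p.1 hp).intervalIntegrable _ _
    exact (intervalIntegral.integral_add_adjacent_intervals hi1 hi2).symm
  · filter_upwards [hΩ.mem_nhds hx] with y hy
    exact ((hcont y hy).aestronglyMeasurable).restrict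
  · exact (hcont x₀ hx).intervalIntegrable _ _
  · -- measurability of F' x₀
    apply Continuous.aestronglyMeasurable
    have h1 : Continuous fun s : ℝ => Dfj (x₀, s) := by
      rw [← continuousOn_univ]
      refine hfC.comp (Continuous.continuousOn (by fun_prop)) ?_
      intro s _; exact hmem hx
    exact h1.clm_comp continuous_const
  · -- the bound
    refine Filter.Eventually.of_forall (fun s => fun hs y hy => ?_)
    exact hC0 y hy s (Set.uIoc_subset_uIcc hs)
  · exact intervalIntegrable_const
  · refine Filter.Eventually.of_forall (fun s => fun hs y hy => ?_)
    have hyΩ : y ∈ Ω := hball (Metric.ball_subset_closedBall hy)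
    have := (hdiff (s := s) hyΩ).comp y (hasFDerivAt_prodMk_left (𝕜 := ℝ) y s); exact this

end helpers

theorem test : True := trivial

/-- the pointwise (differential form of) Pohozaev identity for a solution of
`Δu + f(x,u) = 0` on `Ω`, with `z = x·∇u` and `F(x,u) = ∫₀ᵘ f(x,t) dt`. -/
theorem stmt1 {n : ℕ} (Ω : Set (Euc n)) (hΩ : IsOpen Ω)
    (f : Euc n → ℝ → ℝ)
    (hf : ContDiffOn ℝ 1 (fun p : Euc n × ℝ => f p.1 p.2) (Ω ×ˢ (univ : Set ℝ)))
    (F : Euc n → ℝ → ℝ) (hF : ∀ x t, F x t = ∫ s in (0:ℝ)..t, f x s)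
    (u : Euc n → ℝ) (hu : ContDiffOn ℝ 3 u Ω)
    (heq : ∀ x ∈ Ω, lap u x + f x (u x) = 0)
    (z : Euc n → ℝ) (hz : z = fun x => ∑ i, x i * pd u i x) :
    ∀ x ∈ Ω,
      ∑ i, pd (fun y =>
          z y * pd u i y - u y * pd z i y + y i * (2 * F y (u y) - u y * f y (u y))) i x
        = 2 * n * F x (u x) + (2 - n) * u x * f x (u x)
            + 2 * ∑ i, x i * pd (fun y => F y (u x)) i x := by
  intro x hx
  have hΩx : Ω ∈ nhds x := hΩ.mem_nhds hx
  have hu3 : ∀ y ∈ Ω, ContDiffAt ℝ 3 u y := fun y hy => hu.contDiffAt (hΩ.mem_nhds hy)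
  have hu2 : ∀ y ∈ Ω, ∀ i, ContDiffAt ℝ 2 (pd u i) y := fun y hy i =>
    contDiffAt_pd (hu3 y hy) (by norm_num) i
  have hu1 : ∀ y ∈ Ω, ∀ i j, ContDiffAt ℝ 1 (pd (pd u j) i) y := fun y hy i j =>
    contDiffAt_pd (hu2 y hy j) (by norm_num) i
  have hduy : ∀ y ∈ Ω, DifferentiableAt ℝ u y := fun y hy =>
    (hu3 y hy).differentiableAt (by norm_num)
  have hdu1 : ∀ y ∈ Ω, ∀ i, DifferentiableAt ℝ (pd u i) y := fun y hy i =>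
    (hu2 y hy i).differentiableAt (by norm_num)
  have hdu2 : ∀ y ∈ Ω, ∀ i j, DifferentiableAt ℝ (pd (pd u j) i) y := fun y hy i j =>
    (hu1 y hy i j).differentiableAt one_ne_zero
  -- formula for pd z
  have hzpd : ∀ y ∈ Ω, ∀ i, pd z i y = pd u i y + ∑ j, y j * pd (pd u j) i y := by
    intro y hy i
    rw [hz]
    exact pd_sum_proj_mul (fun j => hdu1 y hy j) i
  have hzev : ∀ i, (pd z i) =ᶠ[nhds x]
      (fun y => pd u i y + ∑ j, y j * pd (pd u j) i y) := by
    intro i; filter_upwards [hΩx] with y hy; exact hzpd y hy i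
  have hdz : ∀ i, DifferentiableAt ℝ (pd z i) x := fun i =>
    DifferentiableAt.congr_of_eventuallyEq
      ((hdu1 x hx i).add (differentiableAt_sum_proj_mul (fun j => hdu2 x hx i j))) (hzev i)
  have hdzx : DifferentiableAt ℝ z x := by
    rw [hz]; exact differentiableAt_sum_proj_mul (fun j => hdu1 x hx j)
  -- second derivative of z
  have hpzz : ∀ i, pd (pd z i) i x
      = 2 * pd (pd u i) i x + ∑ j, x j * pd (pd (pd u j) i) i x := by
    intro i
    rw [pd_congr (hzev i) i,
      pd_add (hdu1 x hx i) (differentiableAt_sum_proj_mul (fun j => hdu2 x hx i j)) i,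
      pd_sum_proj_mul (fun j => hdu2 x hx i j) i]
    ring
  -- third-derivative exchange
  have hT : ∀ j, ∑ i, pd (pd (pd u j) i) i x = pd (lap u) j x := by
    intro j
    have step : ∀ i, pd (pd (pd u j) i) i x = pd (pd (pd u i) i) j x := by
      intro i
      have e1 : (pd (pd u j) i) =ᶠ[nhds x] (fun y => pd (pd u i) j y) := by
        filter_upwards [hΩx] with y hy
        exact pd_pd_symm ((hu3 y hy).of_le (by norm_num)) i j
      rw [pd_congr e1 i]
      exact pd_pd_symm (hu2 x hx i) i j
    rw [Finset.sum_congr rfl (fun i _ => step i),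
      ← pd_sum Finset.univ (fun i _ => hdu2 x hx i i) j]
    rfl
  -- derivatives of the composites with F and f
  obtain ⟨L, hLx, hLjoint⟩ := key_param hΩ hf hx (u x)
  have hFb : ∀ i, pd (fun y => F y (u x)) i x = L (EuclideanSpace.single i 1) := by
    intro i
    have hFfun : (fun y => F y (u x)) = fun y => ∫ s in (0:ℝ)..(u x), f y s :=
      funext fun y => hF y (u x)
    rw [hFfun]; exact hLx.pd_eq i
  have hk : HasFDerivAt (fun y : Euc n => (y, u y))
      ((ContinuousLinearMap.id ℝ (Euc n)).prod (fderiv ℝ u x)) x :=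
    (hasFDerivAt_id x).prodMk (hduy x hx).hasFDerivAt
  have hFcomp : HasFDerivAt (fun y => F y (u y))
      ((L.comp (ContinuousLinearMap.fst ℝ (Euc n) ℝ)
        + f x (u x) • (ContinuousLinearMap.snd ℝ (Euc n) ℝ)).comp
        ((ContinuousLinearMap.id ℝ (Euc n)).prod (fderiv ℝ u x))) x := by
    have h0 : (fun y => F y (u y))
        = (fun p : Euc n × ℝ => ∫ s in (0:ℝ)..p.2, f p.1 s) ∘ (fun y => (y, u y)) :=
      funext fun y => hF y (u y)
    rw [h0]
    exact hLjoint.comp x hk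
  have hFpd : ∀ i, pd (fun y => F y (u y)) i x
      = pd (fun y => F y (u x)) i x + f x (u x) * pd u i x := by
    intro i
    rw [hFcomp.pd_eq i, hFb i]
    simp only [ContinuousLinearMap.comp_apply, ContinuousLinearMap.prod_apply,
      ContinuousLinearMap.id_apply, ContinuousLinearMap.add_apply,
      ContinuousLinearMap.coe_fst', ContinuousLinearMap.coe_snd',
      ContinuousLinearMap.smul_apply, smul_eq_mul]
    rfl
  have hfcomp : HasFDerivAt (fun y => f y (u y))
      ((fderiv ℝ (fun p : Euc n × ℝ => f p.1 p.2) (x, u x)).comp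
        ((ContinuousLinearMap.id ℝ (Euc n)).prod (fderiv ℝ u x))) x := by
    have hopen : IsOpen (Ω ×ˢ (univ : Set ℝ)) := hΩ.prod isOpen_univ
    have hmem2 : (x, u x) ∈ Ω ×ˢ (univ : Set ℝ) := ⟨hx, mem_univ _⟩
    have := ((hf.contDiffAt (hopen.mem_nhds hmem2)).differentiableAt
      one_ne_zero).hasFDerivAt
    exact this.comp x hk
  have hdF : DifferentiableAt ℝ (fun y => F y (u y)) x := hFcomp.differentiableAt
  have hdf : DifferentiableAt ℝ (fun y => f y (u y)) x := hfcomp.differentiableAt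
  have hdG : DifferentiableAt ℝ (fun y => 2 * F y (u y) - u y * f y (u y)) x :=
    ((differentiableAt_const (2:ℝ)).mul hdF).sub ((hduy x hx).mul hdf)
  -- derivative of G
  have hpdG : ∀ i, pd (fun y => 2 * F y (u y) - u y * f y (u y)) i x
      = 2 * (pd (fun y => F y (u x)) i x + f x (u x) * pd u i x)
        - (pd u i x * f x (u x) + u x * pd (fun y => f y (u y)) i x) := by
    intro i
    rw [pd_sub (f := fun y => 2 * F y (u y)) (g := fun y => u y * f y (u y)) ((differentiableAt_const (2:ℝ)).mul hdF) ((hduy x hx).mul hdf) i,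
      pd_const_mul 2 hdF i, pd_mul (hduy x hx) hdf i, hFpd i]
  -- the PDE and its derivative
  have hflap : (lap u) =ᶠ[nhds x] (fun y => -(f y (u y))) := by
    filter_upwards [hΩx] with y hy
    have := heq y hy; linarith
  have hlapx : lap u x = -(f x (u x)) := by
    have := heq x hx; linarith
  have hlapd : ∀ j, pd (lap u) j x = -(pd (fun y => f y (u y)) j x) := by
    intro j
    rw [pd_congr hflap j, pd_neg j]
  -- compute each term of the LHS
  have hterm : ∀ i, pd (fun y =>
        z y * pd u i y - u y * pd z i y + y i * (2 * F y (u y) - u y * f y (u y))) i x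
      = z x * pd (pd u i) i x - u x * pd (pd z i) i x
        + ((2 * F x (u x) - u x * f x (u x)) + x i * pd (fun y =>
            2 * F y (u y) - u y * f y (u y)) i x) := by
    intro i
    rw [pd_add (f := fun y => z y * pd u i y - u y * pd z i y) (g := fun y => y i * (2 * F y (u y) - u y * f y (u y))) ((hdzx.mul (hdu1 x hx i)).sub ((hduy x hx).mul (hdz i)))
        ((differentiableAt_proj i).mul hdG) i,
      pd_sub (f := fun y => z y * pd u i y) (g := fun y => u y * pd z i y) (hdzx.mul (hdu1 x hx i)) ((hduy x hx).mul (hdz i)) i,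
      pd_mul hdzx (hdu1 x hx i) i, pd_mul (hduy x hx) (hdz i) i,
      pd_mul (differentiableAt_proj i) hdG i, pd_proj]
    generalize pd (fun y => 2 * F y (u y) - u y * f y (u y)) i x = P
    simp only [eq_self_iff_true, if_true]
    ring
  rw [Finset.sum_congr rfl (fun i _ => hterm i)]
  -- split the sum
  have lapu_def : lap u x = ∑ i, pd (pd u i) i x := rfl
  have expand : ∀ i, z x * pd (pd u i) i x - u x * pd (pd z i) i x
        + ((2 * F x (u x) - u x * f x (u x)) + x i * pd (fun y =>
            2 * F y (u y) - u y * f y (u y)) i x)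
      = z x * pd (pd u i) i x
        - 2 * u x * pd (pd u i) i x - u x * (∑ j, x j * pd (pd (pd u j) i) i x)
        + (2 * F x (u x) - u x * f x (u x))
        + (2 * (x i * pd (fun y => F y (u x)) i x)
            + f x (u x) * (x i * pd u i x)
            - u x * (x i * pd (fun y => f y (u y)) i x)) := by
    intro i
    rw [hpzz i, hpdG i]
    generalize pd (fun y => F y (u x)) i x = P
    generalize pd (fun y => f y (u y)) i x = Q
    ring
  rw [Finset.sum_congr rfl (fun i _ => expand i)]
  have hswap : ∑ i : Fin n, ∑ j : Fin n, x j * pd (pd (pd u j) i) i x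
      = -∑ j, x j * pd (fun y => f y (u y)) j x := by
    rw [Finset.sum_comm, ← Finset.sum_neg_distrib]
    refine Finset.sum_congr rfl (fun j _ => ?_)
    rw [← Finset.mul_sum, hT j, hlapd j, mul_neg]
  simp only [Finset.sum_add_distrib, Finset.sum_sub_distrib, ← Finset.mul_sum,
    Finset.sum_const, Finset.card_univ, Fintype.card_fin, nsmul_eq_mul]
  have hzx : z x = ∑ i, x i * pd u i x := by rw [hz]
  rw [hswap, ← lapu_def, hlapx, hzx]
  generalize (∑ i : Fin n, x i * pd (fun y => F y (u x)) i x) = SB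
  generalize (∑ i : Fin n, x i * pd (fun y => f y (u y)) i x) = SP
  generalize (∑ i : Fin n, x i * pd u i x) = SA
  ring
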